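/- Let k ≥ 6 be an integer divisible by 3, and let G be the undirected graph consisting of two disjoint cliques, each on 2k/3 − 1 vertices, together with one further vertex adjacent to all other vertices. Then G has minimum degree 2k/3 − 1 and maximum degree 2(2k/3 − 1) ≥ k, but G does not contain the spider Sₖ — the tree consisting of a centre vertex with three pendant paths attached, each path having k/3 edges — as a subgraph. -/

import Mathlib

open Finset

/-- The out-degree of a vertex in a digraph given by its arc relation `A`. -/
def outDeg {V : Type*} [Fintype V] (A : V → V → Prop) [DecidableRel A] (v : V) : ℕ :=
  (Finset.univ.filter fun w => A v w).card

/-- The in-degree of a vertex in a digraph given by its arc relation `A`. -/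
def inDeg {V : Type*} [Fintype V] (A : V → V → Prop) [DecidableRel A] (v : V) : ℕ :=
  (Finset.univ.filter fun w => A w v).card

/-- The number of arcs of a digraph. -/
def numArcs {V : Type*} [Fintype V] (A : V → V → Prop) [DecidableRel A] : ℕ :=
  (Finset.univ.filter fun p : V × V => A p.1 p.2).card

/-- The underlying simple graph of a digraph. -/
def underlying {V : Type*} (A : V → V → Prop) : SimpleGraph V where
  Adj x y := x ≠ y ∧ (A x y ∨ A y x)
  symm := ⟨fun x y h => ⟨h.1.symm, h.2.symm⟩⟩
  loopless := ⟨fun x h => h.1 rfl⟩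

/-- The total degree of a vertex: its degree in the underlying undirected graph. -/
def totDeg {V : Type*} [Fintype V] [DecidableEq V] (A : V → V → Prop) [DecidableRel A]
    (v : V) : ℕ :=
  (Finset.univ.filter fun w => w ≠ v ∧ (A v w ∨ A w v)).card

/-- `A` is an oriented tree: an orientation of a (finite) tree. In particular there
is at most one arc between any two vertices, and the underlying graph is a tree. -/
def IsOrientedTree {V : Type*} (A : V → V → Prop) : Prop :=
  (∀ x y, ¬ (A x y ∧ A y x)) ∧ (underlying A).IsTree

/-- A digraph is antidirected if every vertex has in-degree 0 or out-degree 0. -/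
def IsAntidirected {V : Type*} (A : V → V → Prop) : Prop :=
  ∀ v, (∀ u, ¬ A u v) ∨ (∀ u, ¬ A v u)

/-- `D` (with arc relation `AD`) contains `T` (with arc relation `AT`) as a
subdigraph: there is an injective map of vertices sending arcs to arcs. -/
def Contains {VT VD : Type*} (AT : VT → VT → Prop) (AD : VD → VD → Prop) : Prop :=
  ∃ f : VT → VD, Function.Injective f ∧ ∀ x y, AT x y → AD (f x) (f y)

/-- No orientation of the 4-cycle occurs as a subdigraph. -/
def C4Free {V : Type*} (A : V → V → Prop) : Prop :=
  ∀ a b c d : V, a ≠ b → a ≠ c → a ≠ d → b ≠ c → b ≠ d → c ≠ d →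
    ¬ ((A a b ∨ A b a) ∧ (A b c ∨ A c b) ∧ (A c d ∨ A d c) ∧ (A d a ∨ A a d))

/-- An arc between `x` and `y` in the direction given by `e`. -/
def dirArc {V : Type*} (A : V → V → Prop) (x y : V) : Bool → Prop
  | true => A x y
  | false => A y x

/-- Every orientation of the 4-cycle occurring as a subdigraph is a directed
4-cycle (i.e. all four arcs are oriented the same way around the cycle). -/
def C4StarFree {V : Type*} (A : V → V → Prop) : Prop :=
  ∀ a b c d : V, a ≠ b → a ≠ c → a ≠ d → b ≠ c → b ≠ d → c ≠ d →
    ∀ e1 e2 e3 e4 : Bool,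
      dirArc A a b e1 → dirArc A b c e2 → dirArc A c d e3 → dirArc A d a e4 →
      e1 = e2 ∧ e2 = e3 ∧ e3 = e4

/-- `A` is an out-arborescence with root `r`: an oriented tree all of whose arcs
point away from the root. -/
def IsOutArborescence {V : Type*} (A : V → V → Prop) (r : V) : Prop :=
  IsOrientedTree A ∧
    ∀ x y, A x y → (underlying A).dist r y = (underlying A).dist r x + 1

/-- The spider `Sₖ` with `k = 3m` edges: a centre vertex (`none`) with three
pendant paths attached, each with `m` edges. The vertex `some (j, i)` is the
`(i+1)`-st vertex on the `j`-th path. -/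
def spiderAdj (m : ℕ) : Option (Fin 3 × Fin m) → Option (Fin 3 × Fin m) → Prop
  | none, none => False
  | none, some (_, i) => (i : ℕ) = 0
  | some (_, i), none => (i : ℕ) = 0
  | some (j, i), some (j₂, i₂) => j = j₂ ∧ ((i : ℕ) + 1 = i₂ ∨ (i₂ : ℕ) + 1 = i)

/-- The block of a vertex: `0` for the first clique `A`, `1` for the second
clique `B`, `2` for the universal vertex `u`. -/
def blk {m : ℕ} : Fin m ⊕ Fin m ⊕ Unit → Fin 3
  | Sum.inl _ => 0
  | Sum.inr (Sum.inl _) => 1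
  | Sum.inr (Sum.inr _) => 2


/-- The undirected graph consisting of two disjoint cliques of size `m` together
with one further vertex adjacent to all other vertices. -/
def cliquesPlusUniversal (m : ℕ) : SimpleGraph (Fin m ⊕ Fin m ⊕ Unit) where
  Adj x y := x ≠ y ∧ (blk x = blk y ∨ blk x = 2 ∨ blk y = 2)
  symm := by
    refine ⟨?_⟩
    intro x y h
    refine ⟨h.1.symm, ?_⟩
    rcases h.2 with h' | h' | h'
    · exact Or.inl h'.symm
    · exact Or.inr (Or.inr h')
    · exact Or.inr (Or.inl h')
  loopless := ⟨fun x h => h.1 rfl⟩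

instance (m : ℕ) : DecidableRel (cliquesPlusUniversal m).Adj :=
  fun x y => inferInstanceAs (Decidable (x ≠ y ∧ (blk x = blk y ∨ blk x = 2 ∨ blk y = 2)))


-- ===== auxiliary lemmas =====

lemma blk_eq_two_iff {m : ℕ} (w : Fin m ⊕ Fin m ⊕ Unit) :
    blk w = 2 ↔ w = Sum.inr (Sum.inr ()) := by
  rcases w with a | a | a <;> simp [blk]

lemma adj_blk {m : ℕ} {w w' : Fin m ⊕ Fin m ⊕ Unit}
    (h : (cliquesPlusUniversal m).Adj w w')
    (hw : w ≠ Sum.inr (Sum.inr ())) (hw' : w' ≠ Sum.inr (Sum.inr ())) :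
    blk w = blk w' := by
  rcases h.2 with h' | h' | h'
  · exact h'
  · exact absurd ((blk_eq_two_iff w).mp h') hw
  · exact absurd ((blk_eq_two_iff w').mp h') hw'

lemma card_blk_le {m : ℕ} (b : Fin 3) (hb : b ≠ 2) :
    (Finset.univ.filter fun w : Fin m ⊕ Fin m ⊕ Unit => blk w = b).card ≤ m := by
  have h0 : b = 0 ∨ b = 1 := by omega
  rcases h0 with rfl | rfl
  · have : (Finset.univ.filter fun w : Fin m ⊕ Fin m ⊕ Unit => blk w = 0)
        = Finset.univ.map ⟨Sum.inl, Sum.inl_injective⟩ := by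
      ext w
      rcases w with a | a | a <;> simp only [Finset.mem_filter, Finset.mem_univ, true_and] <;> simp [blk]
    rw [this]; simp
  · have : (Finset.univ.filter fun w : Fin m ⊕ Fin m ⊕ Unit => blk w = 1)
        = Finset.univ.map ⟨fun a => Sum.inr (Sum.inl a),
            fun a b h => by simpa using h⟩ := by
      ext w
      rcases w with a | a | a <;> simp only [Finset.mem_filter, Finset.mem_univ, true_and] <;> simp [blk]
      · exact ⟨a, rfl⟩
      · intro x h; cases h
    rw [this]; simp

lemma deg_univ_vertex {m : ℕ} :
    (cliquesPlusUniversal m).degree (Sum.inr (Sum.inr ())) = 2 * m := by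
  classical
  have h : (cliquesPlusUniversal m).neighborFinset (Sum.inr (Sum.inr ()))
      = Finset.univ.erase (Sum.inr (Sum.inr ())) := by
    ext w
    rcases w with a | a | a <;> simp only [SimpleGraph.mem_neighborFinset] <;>
      simp [SimpleGraph.mem_neighborFinset, cliquesPlusUniversal, blk, ne_comm]
  rw [SimpleGraph.degree, h, Finset.card_erase_of_mem (Finset.mem_univ _)]
  simp [Fintype.card_sum]
  omega

lemma deg_inl {m : ℕ} (a : Fin m) :
    (cliquesPlusUniversal m).degree (Sum.inl a) = m := by
  classical
  have h : (cliquesPlusUniversal m).neighborFinset (Sum.inl a)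
      = ((Finset.univ.map ⟨Sum.inl, Sum.inl_injective⟩).erase (Sum.inl a))
          ∪ {Sum.inr (Sum.inr ())} := by
    ext w
    rcases w with b | b | b <;> simp only [SimpleGraph.mem_neighborFinset] <;>
      simp [SimpleGraph.mem_neighborFinset, cliquesPlusUniversal, blk, ne_comm, eq_comm]
  rw [SimpleGraph.degree, h, Finset.card_union_of_disjoint (by simp),
    Finset.card_erase_of_mem (by simp)]
  have := a.pos
  simp
  omega

lemma deg_inr {m : ℕ} (a : Fin m) :
    (cliquesPlusUniversal m).degree (Sum.inr (Sum.inl a)) = m := by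
  classical
  have h : (cliquesPlusUniversal m).neighborFinset (Sum.inr (Sum.inl a))
      = ((Finset.univ.map ⟨fun x => Sum.inr (Sum.inl x),
            fun x y h => by simpa using h⟩).erase (Sum.inr (Sum.inl a)))
          ∪ {Sum.inr (Sum.inr ())} := by
    ext w
    rcases w with b | b | b <;> simp only [SimpleGraph.mem_neighborFinset] <;>
      simp [SimpleGraph.mem_neighborFinset, cliquesPlusUniversal, blk, ne_comm, eq_comm]
    exact fun _ => ⟨b, rfl⟩
  rw [SimpleGraph.degree, h, Finset.card_union_of_disjoint (by simp; intro x h; cases h),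
    Finset.card_erase_of_mem (by simp; exact ⟨a, rfl⟩)]
  have := a.pos
  simp
  omega

/-- **Claim (extremal example, graph version).** For `3 ∣ k`, `k ≥ 6`, the graph
`G` consisting of two cliques of size `2k/3 − 1` plus a universal vertex has
minimum degree `2k/3 − 1`, maximum degree `2(2k/3 − 1) ≥ k`, but contains no
copy of the spider `Sₖ` (centre with three pendant paths of `k/3` edges each). -/
theorem extremal_graph_spider
    (k : ℕ) (hk : 6 ≤ k) (hdvd : 3 ∣ k) :
    ((∀ v, 2 * k / 3 - 1 ≤ (cliquesPlusUniversal (2 * k / 3 - 1)).degree v) ∧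
      (∃ v, (cliquesPlusUniversal (2 * k / 3 - 1)).degree v = 2 * k / 3 - 1)) ∧
    ((∀ v, (cliquesPlusUniversal (2 * k / 3 - 1)).degree v ≤ 2 * (2 * k / 3 - 1)) ∧
      (∃ v, (cliquesPlusUniversal (2 * k / 3 - 1)).degree v = 2 * (2 * k / 3 - 1)) ∧
      k ≤ 2 * (2 * k / 3 - 1)) ∧
    ¬ ∃ f : Option (Fin 3 × Fin (k / 3)) → Fin (2 * k / 3 - 1) ⊕ Fin (2 * k / 3 - 1) ⊕ Unit,
        Function.Injective f ∧
        ∀ x y, spiderAdj (k / 3) x y → (cliquesPlusUniversal (2 * k / 3 - 1)).Adj (f x) (f y) := by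
  classical
  obtain ⟨t, rfl⟩ := hdvd
  have ht : 2 ≤ t := by omega
  have e1 : 2 * (3 * t) / 3 = 2 * t := by omega
  have e2 : 3 * t / 3 = t := by omega
  rw [e1, e2]
  have tpos : 0 < t := by omega
  refine ⟨⟨?_, ?_⟩, ⟨?_, ?_, ?_⟩, ?_⟩
  · intro v
    rcases v with a | a | a
    · rw [deg_inl]
    · rw [deg_inr]
    · rw [deg_univ_vertex]; omega
  · exact ⟨Sum.inl ⟨0, by omega⟩, deg_inl _⟩
  · intro v
    rcases v with a | a | a
    · rw [deg_inl]; omega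
    · rw [deg_inr]; omega
    · rw [deg_univ_vertex]
  · exact ⟨Sum.inr (Sum.inr ()), deg_univ_vertex⟩
  · omega
  · rintro ⟨f, hinj, hf⟩
    set u : Fin (2*t-1) ⊕ Fin (2*t-1) ⊕ Unit := Sum.inr (Sum.inr ()) with hu
    -- counting lemma
    have key : ∀ (S : Finset (Option (Fin 3 × Fin t))) (b : Fin 3), b ≠ 2 →
        (∀ x ∈ S, blk (f x) = b) → S.card ≤ 2 * t - 1 := by
      intro S b hb hS
      rw [← Finset.card_image_of_injective S hinj]
      refine le_trans (Finset.card_le_card ?_) (card_blk_le b hb)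
      intro w hw
      obtain ⟨x, hx, rfl⟩ := Finset.mem_image.mp hw
      simp only [Finset.mem_filter, Finset.mem_univ, true_and]
      exact hS x hx
    -- adjacency along arms
    have step : ∀ (j : Fin 3) (i : ℕ) (h1 : i < t) (h2 : i + 1 < t),
        (cliquesPlusUniversal (2*t-1)).Adj (f (some (j, ⟨i, h1⟩))) (f (some (j, ⟨i+1, h2⟩))) := by
      intro j i h1 h2
      exact hf _ _ ⟨rfl, Or.inl rfl⟩
    have centeradj : ∀ j : Fin 3,
        (cliquesPlusUniversal (2*t-1)).Adj (f none) (f (some (j, ⟨0, tpos⟩))) := by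
      intro j
      exact hf _ _ rfl
    have armconst : ∀ (j : Fin 3), (∀ i : Fin t, f (some (j, i)) ≠ u) →
        ∀ i : Fin t, blk (f (some (j, i))) = blk (f (some (j, ⟨0, tpos⟩))) := by
      intro j hj i
      obtain ⟨n, hn⟩ := i
      induction n with
      | zero => rfl
      | succ n ih =>
        have h1 : n < t := by omega
        rw [← adj_blk (step j n h1 hn) (hj _) (hj _)]
        exact ih h1
    -- arm images and their cards
    have arminj : ∀ j : Fin 3, Function.Injective (fun i : Fin t => (some (j, i) : Option (Fin 3 × Fin t))) := by
      intro j a b h; simpa using h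
    have armcard : ∀ j : Fin 3,
        ((Finset.univ : Finset (Fin t)).image fun i => (some (j, i) : Option (Fin 3 × Fin t))).card = t := by
      intro j
      rw [Finset.card_image_of_injective _ (arminj j)]; simp
    have armdisj : ∀ j1 j2 : Fin 3, j1 ≠ j2 →
        Disjoint ((Finset.univ : Finset (Fin t)).image fun i => (some (j1, i) : Option (Fin 3 × Fin t)))
          (Finset.univ.image fun i => (some (j2, i) : Option (Fin 3 × Fin t))) := by
      intro j1 j2 hne
      rw [Finset.disjoint_left]
      intro x hx1 hx2
      obtain ⟨a, _, rfl⟩ := Finset.mem_image.mp hx1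
      obtain ⟨b, _, hb⟩ := Finset.mem_image.mp hx2
      have := ((Prod.mk.injEq _ _ _ _).mp (Option.some_injective _ hb)).1
      exact hne this.symm
    by_cases hA : f none = u
    · -- centre maps to universal vertex
      have harm : ∀ (j : Fin 3) (i : Fin t), f (some (j, i)) ≠ u := by
        intro j i h
        exact Option.some_ne_none _ (hinj (h.trans hA.symm))
      set c : Fin 3 → Fin 3 := fun j => blk (f (some (j, ⟨0, tpos⟩))) with hc
      have hc2 : ∀ j, c j ≠ 2 := by
        intro j h
        exact harm j _ ((blk_eq_two_iff _).mp h)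
      have pigeon : ∃ j1 j2 : Fin 3, j1 ≠ j2 ∧ c j1 = c j2 := by
        by_cases h01 : c 0 = c 1
        · exact ⟨0, 1, by decide, h01⟩
        by_cases h02 : c 0 = c 2
        · exact ⟨0, 2, by decide, h02⟩
        refine ⟨1, 2, by decide, ?_⟩
        have := hc2 0; have := hc2 1; have := hc2 2
        omega
      obtain ⟨j1, j2, hne, heq⟩ := pigeon
      set S : Finset (Option (Fin 3 × Fin t)) :=
        (Finset.univ.image fun i => (some (j1, i) : Option (Fin 3 × Fin t)))
          ∪ Finset.univ.image (fun i => some (j2, i)) with hS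
      have hmem : ∀ x ∈ S, blk (f x) = c j1 := by
        intro x hx
        rcases Finset.mem_union.mp hx with hx | hx
        · obtain ⟨i, _, rfl⟩ := Finset.mem_image.mp hx
          exact armconst j1 (harm j1) i
        · obtain ⟨i, _, rfl⟩ := Finset.mem_image.mp hx
          exact (armconst j2 (harm j2) i).trans heq.symm
      have hcard : S.card = 2 * t := by
        rw [hS, Finset.card_union_of_disjoint (armdisj j1 j2 hne), armcard, armcard]
        ring
      have := key S (c j1) (hc2 j1) hmem
      omega
    · -- centre does not map to universal vertex
      have main : ∀ j1 j2 : Fin 3, j1 ≠ j2 →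
          (∀ i : Fin t, f (some (j1, i)) ≠ u) →
          (∀ i : Fin t, f (some (j2, i)) ≠ u) → False := by
        intro j1 j2 hne hj1 hj2
        set b : Fin 3 := blk (f none) with hb
        have hb2 : b ≠ 2 := by
          intro h
          exact hA ((blk_eq_two_iff _).mp h)
        set S : Finset (Option (Fin 3 × Fin t)) :=
          insert none
            ((Finset.univ.image fun i => (some (j1, i) : Option (Fin 3 × Fin t)))
              ∪ Finset.univ.image (fun i => some (j2, i))) with hS
        have base : ∀ (j : Fin 3), (∀ i : Fin t, f (some (j, i)) ≠ u) →
            blk (f (some (j, ⟨0, tpos⟩))) = b := by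
          intro j hj
          exact (adj_blk (centeradj j) hA (hj _)).symm
        have hmem : ∀ x ∈ S, blk (f x) = b := by
          intro x hx
          rcases Finset.mem_insert.mp hx with rfl | hx
          · rfl
          rcases Finset.mem_union.mp hx with hx | hx
          · obtain ⟨i, _, rfl⟩ := Finset.mem_image.mp hx
            exact (armconst j1 hj1 i).trans (base j1 hj1)
          · obtain ⟨i, _, rfl⟩ := Finset.mem_image.mp hx
            exact (armconst j2 hj2 i).trans (base j2 hj2)
        have hnone : (none : Option (Fin 3 × Fin t)) ∉
            ((Finset.univ.image fun i => (some (j1, i) : Option (Fin 3 × Fin t)))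
              ∪ Finset.univ.image (fun i => some (j2, i))) := by
          simp
        have hcard : S.card = 2 * t + 1 := by
          rw [hS, Finset.card_insert_of_notMem hnone,
            Finset.card_union_of_disjoint (armdisj j1 j2 hne), armcard, armcard]
          ring
        have := key S b hb2 hmem
        omega
      by_cases hex : ∃ p : Fin 3 × Fin t, f (some p) = u
      · obtain ⟨⟨j0, i0⟩, hp⟩ := hex
        have havoid : ∀ j : Fin 3, j ≠ j0 → ∀ i : Fin t, f (some (j, i)) ≠ u := by
          intro j hj i h
          have := hinj (h.trans hp.symm)
          simp only [Option.some.injEq, Prod.mk.injEq] at this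
          exact hj this.1
        have h3 : ∀ j : Fin 3, j + 1 ≠ j + 2 ∧ j + 1 ≠ j ∧ j + 2 ≠ j := by decide
        obtain ⟨ha, hb', hc'⟩ := h3 j0
        exact main (j0 + 1) (j0 + 2) ha (havoid _ hb') (havoid _ hc')
      · push_neg at hex
        exact main 0 1 (by decide) (fun i => hex (0, i)) (fun i => hex (1, i))
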